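/- Gonchar's Lemma, part (i): if a sequence of functions φₙ holomorphic on a domain D ⊂ ℂ converges in σ-content on compact subsets of D to a function φ, then {φₙ} converges uniformly on compact subsets of D, and the limit is holomorphic in D (equal to φ except possibly on a set of 1-dimensional Hausdorff content zero). -/

import Mathlib

open Polynomial Filter Set
open scoped ENNReal NNReal Topology Classical

noncomputable section

/-- 1-dimensional Hausdorff content: infimum of sums of radii over countable disk covers. -/
def sigmaContent (B : Set ℂ) : ℝ≥0∞ :=
  ⨅ (c : ℕ → ℂ) (r : ℕ → ℝ≥0) (_ : B ⊆ ⋃ i, Metric.closedBall (c i) (r i)),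
    ∑' i, (r i : ℝ≥0∞)

/-- Convergence in σ-content on compact subsets of `D`. -/
def SigmaConvOn (φn : ℕ → ℂ → ℂ) (φ : ℂ → ℂ) (D : Set ℂ) : Prop :=
  ∀ K ⊆ D, IsCompact K → ∀ ε : ℝ, 0 < ε →
    Tendsto (fun n => sigmaContent {z ∈ K | ε < ‖φn n z - φ z‖}) atTop (𝓝 0)

/-- The order of `a` as a pole of `f` (0 if `f` is not meromorphic at `a` or has no pole
there). -/
def poleOrd (f : ℂ → ℂ) (a : ℂ) : ℕ :=
  if h : MeromorphicAt f a then (-(WithTop.untopD 0 (meromorphicOrderAt f a))).toNat else 0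

/-- `F` has at most `k` poles, counting multiplicities, in `D`. -/
def AtMostPoles (F : ℂ → ℂ) (D : Set ℂ) (k : ℕ) : Prop :=
  ∀ S : Finset ℂ, ↑S ⊆ D → ∑ a ∈ S, poleOrd F a ≤ k

lemma sigmaContent_le {B : Set ℂ} {c : ℕ → ℂ} {r : ℕ → ℝ≥0}
    (h : B ⊆ ⋃ i, Metric.closedBall (c i) (r i)) :
    sigmaContent B ≤ ∑' i, (r i : ℝ≥0∞) := by
  exact iInf_le_of_le c (iInf_le_of_le r (iInf_le _ h))

lemma sigmaContent_mono {A B : Set ℂ} (h : A ⊆ B) : sigmaContent A ≤ sigmaContent B := by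
  refine le_iInf fun c => le_iInf fun r => le_iInf fun hc => ?_
  exact sigmaContent_le (h.trans hc)

lemma exists_cover_of_lt {B : Set ℂ} {t : ℝ≥0∞} (h : sigmaContent B < t) :
    ∃ (c : ℕ → ℂ) (r : ℕ → ℝ≥0), B ⊆ (⋃ i, Metric.closedBall (c i) (r i)) ∧
      ∑' i, (r i : ℝ≥0∞) < t := by
  simp only [sigmaContent, iInf_lt_iff] at h
  obtain ⟨c, r, hc, hs⟩ := h
  exact ⟨c, r, hc, hs⟩

lemma sigmaContent_iUnion_le (A : ℕ → Set ℂ) :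
    sigmaContent (⋃ n, A n) ≤ ∑' n, sigmaContent (A n) := by
  set b := ∑' n, sigmaContent (A n)
  rcases eq_top_or_lt_top b with hb | hb
  · simp [hb]
  refine ENNReal.le_of_forall_pos_le_add fun ε hε _ => ?_
  obtain ⟨δ, hδ, hδs⟩ := ENNReal.exists_pos_sum_of_countable (ε := ε) (by simpa using hε.ne') ℕ
  have hlt : ∀ n, sigmaContent (A n) < sigmaContent (A n) + δ n := by
    intro n
    refine ENNReal.lt_add_right ?_ (by simpa using (hδ n).ne')
    exact ((ENNReal.le_tsum n).trans_lt hb).ne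
  choose c r hcov hsum using fun n => exists_cover_of_lt (hlt n)
  set e : ℕ ≃ ℕ × ℕ := (Denumerable.eqv (ℕ × ℕ)).symm
  have hcov2 : (⋃ n, A n) ⊆ ⋃ i, Metric.closedBall (c (e i).1 (e i).2) (r (e i).1 (e i).2) := by
    intro z hz
    obtain ⟨n, hn⟩ := mem_iUnion.mp hz
    obtain ⟨i, hi⟩ := mem_iUnion.mp (hcov n hn)
    refine mem_iUnion.mpr ⟨e.symm (n, i), ?_⟩
    have : e (e.symm (n, i)) = (n, i) := e.apply_symm_apply _
    rw [this]
    exact hi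
  calc sigmaContent (⋃ n, A n) ≤ ∑' i, ((r (e i).1 (e i).2 : ℝ≥0∞)) := sigmaContent_le hcov2
    _ = ∑' p : ℕ × ℕ, (r p.1 p.2 : ℝ≥0∞) := e.tsum_eq (fun p => (r p.1 p.2 : ℝ≥0∞))
    _ = ∑' n, ∑' i, (r n i : ℝ≥0∞) := ENNReal.tsum_prod'
    _ ≤ ∑' n, (sigmaContent (A n) + δ n) := ENNReal.tsum_le_tsum fun n => (hsum n).le
    _ = b + ∑' n, (δ n : ℝ≥0∞) := ENNReal.tsum_add
    _ ≤ b + ε := add_le_add_right hδs.le b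

lemma sigmaContent_iUnion_zero {A : ℕ → Set ℂ} (h : ∀ n, sigmaContent (A n) = 0) :
    sigmaContent (⋃ n, A n) = 0 := by
  refine le_antisymm ((sigmaContent_iUnion_le A).trans ?_) (zero_le)
  simp [h]

lemma sigmaContent_union_le (A B : Set ℂ) :
    sigmaContent (A ∪ B) ≤ sigmaContent A + sigmaContent B := by
  have h : A ∪ B = ⋃ n, (if n = 0 then A else if n = 1 then B else ∅ : Set ℂ) := by
    ext z
    simp only [mem_union, mem_iUnion]
    constructor
    · rintro (h | h); exacts [⟨0, by simp [h]⟩, ⟨1, by simp [h]⟩]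
    · rintro ⟨n, hn⟩
      rcases Nat.lt_or_ge n 2 with h2 | h2
      · interval_cases n <;> simp_all
      · rw [if_neg (by omega), if_neg (by omega)] at hn
        exact absurd hn (notMem_empty z)
  have hempty : sigmaContent ∅ = 0 := by
    refine le_antisymm ?_ (zero_le)
    simpa using sigmaContent_le (c := fun _ => 0) (r := fun _ => 0) (empty_subset _)
  rw [h]
  refine (sigmaContent_iUnion_le _).trans ?_
  rw [tsum_eq_sum (s := {0, 1}) ?_]
  · simp
  · intro n hn
    have h0 : n ≠ 0 := by simp at hn; tauto
    have h1 : n ≠ 1 := by simp at hn; tauto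
    simp [h0, h1, hempty]

lemma exists_good_radius {E : Set ℂ} (z : ℂ) {a b : ℝ} (hab : a < b)
    (hE : 2 * sigmaContent E < ENNReal.ofReal (b - a)) :
    ∃ ρ ∈ Set.Ioo a b, ∀ w ∈ E, dist w z ≠ ρ := by
  have hE' : sigmaContent E < ENNReal.ofReal (b - a) / 2 := by
    rw [ENNReal.lt_div_iff_mul_lt (by norm_num) (by norm_num), mul_comm]
    exact hE
  obtain ⟨c, r, hcov, hsum⟩ := exists_cover_of_lt hE'
  set T : Set ℝ := ⋃ i, Icc (dist (c i) z - r i) (dist (c i) z + r i) with hT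
  have hvolT : MeasureTheory.volume T < MeasureTheory.volume (Ioo a b) := by
    calc MeasureTheory.volume T ≤ ∑' i, MeasureTheory.volume
          (Icc (dist (c i) z - r i) (dist (c i) z + r i)) := MeasureTheory.measure_iUnion_le _
      _ = ∑' i, ENNReal.ofReal (2 * r i) := by
          congr 1; funext i; rw [Real.volume_Icc]; ring_nf
      _ = 2 * ∑' i, (r i : ℝ≥0∞) := by
          rw [← ENNReal.tsum_mul_left]
          congr 1; funext i
          rw [ENNReal.ofReal_mul (by norm_num), ENNReal.ofReal_coe_nnreal,
            ENNReal.ofReal_ofNat]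
      _ < 2 * (ENNReal.ofReal (b - a) / 2) := by
          exact ENNReal.mul_lt_mul_iff_right (by norm_num) (by norm_num) |>.mpr hsum
      _ = ENNReal.ofReal (b - a) := ENNReal.mul_div_cancel' (by norm_num) (by norm_num)
      _ = MeasureTheory.volume (Ioo a b) := (Real.volume_Ioo).symm
  have hnsub : ¬ (Ioo a b ⊆ T) := fun hsub => absurd (MeasureTheory.measure_mono hsub) (not_le.mpr hvolT)
  obtain ⟨ρ, hρI, hρT⟩ := not_subset.mp hnsub
  refine ⟨ρ, hρI, fun w hw hdw => ?_⟩
  obtain ⟨i, hi⟩ := mem_iUnion.mp (hcov hw)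
  refine hρT (mem_iUnion.mpr ⟨i, ?_⟩)
  have h1 : |dist w z - dist (c i) z| ≤ dist w (c i) := abs_dist_sub_le _ _ _
  have h2 : dist w (c i) ≤ r i := Metric.mem_closedBall.mp hi
  rw [hdw] at h1
  have := abs_le.mp (h1.trans h2)
  constructor <;> linarith [this.1, this.2]

set_option maxHeartbeats 1000000 in
/-- Gonchar's Lemma, part (i): a sequence of holomorphic functions on a domain `D` converging
in σ-content on compact subsets of `D` converges uniformly on compact subsets of `D` to a
holomorphic function, which equals the σ-limit off a set of σ-content zero. -/
theorem gonchar_lemma_i (D : Set ℂ) (hD : IsOpen D) (hDc : IsConnected D)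
    (φn : ℕ → ℂ → ℂ) (φ : ℂ → ℂ) (hφn : ∀ n, AnalyticOnNhd ℂ (φn n) D)
    (hconv : SigmaConvOn φn φ D) :
    ∃ ψ : ℂ → ℂ, AnalyticOnNhd ℂ ψ D ∧
      (∀ K ⊆ D, IsCompact K → TendstoUniformlyOn φn ψ atTop K) ∧
      sigmaContent {z ∈ D | ψ z ≠ φ z} = 0 := by
  have hdiff : ∀ n, DifferentiableOn ℂ (φn n) D := fun n => (hφn n).differentiableOn
  -- Step A: uniform Cauchy on compacts
  have key : ∀ K ⊆ D, IsCompact K → UniformCauchySeqOn φn atTop K := by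
    intro K hKD hK
    obtain ⟨δ, hδ, hKδ⟩ := hK.exists_cthickening_subset_open hD hKD
    set K' := Metric.cthickening δ K with hK'def
    have hK' : IsCompact K' := hK.cthickening
    rw [Metric.uniformCauchySeqOn_iff]
    intro ε hε
    set ε' := ε / 3 with hε'def
    have hε' : 0 < ε' := by positivity
    have hconv' := hconv K' hKδ hK' ε' hε'
    set B : ℕ → Set ℂ := fun n => {z ∈ K' | ε' < ‖φn n z - φ z‖} with hBdef
    have hev : ∀ᶠ n in atTop, sigmaContent (B n) < ENNReal.ofReal (δ / 16) := by
      refine hconv'.eventually_lt_const ?_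
      simp [ENNReal.ofReal_pos]; linarith
    obtain ⟨N, hN⟩ := eventually_atTop.mp hev
    refine ⟨N, fun m hm n hn z hz => ?_⟩
    have hsmall : 2 * sigmaContent (B m ∪ B n) < ENNReal.ofReal (δ - δ / 2) := by
      have h1 : sigmaContent (B m ∪ B n) < ENNReal.ofReal (δ / 16) + ENNReal.ofReal (δ / 16) :=
        (sigmaContent_union_le _ _).trans_lt (ENNReal.add_lt_add (hN m hm) (hN n hn))
      calc 2 * sigmaContent (B m ∪ B n)
          < 2 * (ENNReal.ofReal (δ / 16) + ENNReal.ofReal (δ / 16)) := by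
            exact (ENNReal.mul_lt_mul_iff_right (by norm_num) (by norm_num)).mpr h1
        _ = ENNReal.ofReal (δ / 4) := by
            rw [← ENNReal.ofReal_add (by linarith) (by linarith), two_mul,
              ← ENNReal.ofReal_add (by linarith) (by linarith)]
            congr 1; ring
        _ ≤ ENNReal.ofReal (δ - δ / 2) := ENNReal.ofReal_le_ofReal (by linarith)
    obtain ⟨ρ, hρI, hρE⟩ := exists_good_radius z (a := δ / 2) (b := δ) (by linarith) hsmall
    have hρpos : 0 < ρ := lt_trans (by linarith) hρI.1
    -- the closed ball of radius ρ around z is inside K'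
    have hball : Metric.closedBall z ρ ⊆ K' := by
      intro w hw
      exact Metric.mem_cthickening_of_dist_le w z δ K hz
        ((Metric.mem_closedBall.mp hw).trans (le_of_lt hρI.2))
    -- bound on the sphere
    have hsphere : ∀ w ∈ Metric.sphere z ρ, ‖(φn m - φn n) w‖ ≤ 2 * ε' := by
      intro w hw
      have hwK' : w ∈ K' := hball (Metric.sphere_subset_closedBall hw)
      have hwdist : dist w z = ρ := Metric.mem_sphere.mp hw
      have hwm : ‖φn m w - φ w‖ ≤ ε' := by
        by_contra hcon
        exact hρE w (Or.inl ⟨hwK', lt_of_not_ge hcon⟩) hwdist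
      have hwn : ‖φn n w - φ w‖ ≤ ε' := by
        by_contra hcon
        exact hρE w (Or.inr ⟨hwK', lt_of_not_ge hcon⟩) hwdist
      calc ‖(φn m - φn n) w‖ = ‖(φn m w - φ w) - (φn n w - φ w)‖ := by
            rw [Pi.sub_apply]; congr 1; ring
        _ ≤ ‖φn m w - φ w‖ + ‖φn n w - φ w‖ := norm_sub_le _ _
        _ ≤ 2 * ε' := by linarith
    -- maximum modulus
    have hdc : DiffContOnCl ℂ (φn m - φn n) (Metric.ball z ρ) := by
      refine DifferentiableOn.diffContOnCl ?_
      rw [closure_ball z hρpos.ne']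
      exact ((hdiff m).sub (hdiff n)).mono (hball.trans hKδ)
    have hmax : ‖(φn m - φn n) z‖ ≤ 2 * ε' := by
      refine Complex.norm_le_of_forall_mem_frontier_norm_le Metric.isBounded_ball hdc ?_ ?_
      · rw [frontier_ball z hρpos.ne']
        exact hsphere
      · rw [closure_ball z hρpos.ne']
        exact Metric.mem_closedBall_self hρpos.le
    rw [dist_eq_norm]
    calc ‖φn m z - φn n z‖ = ‖(φn m - φn n) z‖ := rfl
      _ ≤ 2 * ε' := hmax
      _ < ε := by rw [hε'def]; linarith
  -- Step B: the limit function
  set ψ : ℂ → ℂ := fun z => limUnder atTop (fun n => φn n z) with hψdef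
  have htends : ∀ z ∈ D, Tendsto (fun n => φn n z) atTop (𝓝 (ψ z)) := by
    intro z hz
    have hcs : CauchySeq (fun n => φn n z) := by
      have h1 := key {z} (singleton_subset_iff.mpr hz) isCompact_singleton
      rw [Metric.uniformCauchySeqOn_iff] at h1
      rw [Metric.cauchySeq_iff]
      intro ε hε
      obtain ⟨N, hN⟩ := h1 ε hε
      exact ⟨N, fun m hm n hn => hN m hm n hn z rfl⟩
    exact hcs.tendsto_limUnder
  have hUnif : ∀ K ⊆ D, IsCompact K → TendstoUniformlyOn φn ψ atTop K := by
    intro K hKD hK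
    exact (key K hKD hK).tendstoUniformlyOn_of_tendsto fun x hx => htends x (hKD hx)
  have hloc : TendstoLocallyUniformlyOn φn ψ atTop D :=
    (tendstoLocallyUniformlyOn_iff_forall_isCompact hD).mpr hUnif
  have hψdiff : DifferentiableOn ℂ ψ D :=
    hloc.differentiableOn (Eventually.of_forall hdiff) hD
  refine ⟨ψ, hψdiff.analyticOnNhd hD, hUnif, ?_⟩
  -- Step C: exceptional set has zero content
  set Km : ℕ → Set ℂ := fun m =>
    Metric.closedBall 0 m ∩ {z | (1 / (m + 1) : ℝ≥0∞) ≤ EMetric.infEdist z Dᶜ} with hKmdef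
  have hKmD : ∀ m, Km m ⊆ D := by
    intro m z hz
    have h1 : (0 : ℝ≥0∞) < EMetric.infEdist z Dᶜ :=
      lt_of_lt_of_le (by simp [ENNReal.div_pos_iff]) hz.2
    have h2 := EMetric.infEdist_pos_iff_notMem_closure.mp h1
    rw [hD.isClosed_compl.closure_eq] at h2
    simpa using h2
  have hKmC : ∀ m, IsCompact (Km m) := by
    intro m
    refine (Metric.isCompact_of_isClosed_isBounded ?_ (Metric.isBounded_closedBall.subset
      inter_subset_left))
    refine Metric.isClosed_closedBall.inter ?_
    exact isClosed_le continuous_const (EMetric.continuous_infEdist)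
  have hKmcover : ∀ z ∈ D, ∃ m, z ∈ Km m := by
    intro z hz
    have h1 : (0 : ℝ≥0∞) < EMetric.infEdist z Dᶜ := by
      refine EMetric.infEdist_pos_iff_notMem_closure.mpr ?_
      rw [hD.isClosed_compl.closure_eq]
      simpa using hz
    obtain ⟨m1, hm1⟩ := exists_nat_gt ‖z‖
    obtain ⟨m2, hm2⟩ := ENNReal.exists_inv_nat_lt h1.ne'
    refine ⟨max m1 m2, ?_, ?_⟩
    · simp only [Metric.mem_closedBall, dist_zero_right]
      exact hm1.le.trans (by exact_mod_cast le_max_left m1 m2)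
    · refine le_trans ?_ hm2.le
      rw [one_div]
      refine ENNReal.inv_le_inv.mpr ?_
      have hcast : (m2 : ℝ≥0∞) ≤ ((max m1 m2 : ℕ) : ℝ≥0∞) := by exact_mod_cast le_max_right m1 m2
      exact hcast.trans le_self_add
  have hSzero : ∀ m k : ℕ, sigmaContent {z ∈ Km m | (1:ℝ)/(k+1) < ‖ψ z - φ z‖} = 0 := by
    intro m k
    set ε : ℝ := 1/(k+1) with hεdef
    have hε : 0 < ε := by positivity
    have htu := hUnif (Km m) (hKmD m) (hKmC m)
    rw [Metric.tendstoUniformlyOn_iff] at htu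
    have h1 := htu (ε/2) (by positivity)
    have h2 := hconv (Km m) (hKmD m) (hKmC m) (ε/2) (by positivity)
    refine le_antisymm (ge_of_tendsto h2 ?_) (zero_le)
    filter_upwards [h1] with n hn
    refine sigmaContent_mono ?_
    rintro z ⟨hzK, hz2⟩
    refine ⟨hzK, ?_⟩
    have h3 := hn z hzK
    rw [dist_eq_norm] at h3
    have h5 : ‖ψ z - φ z‖ - ‖ψ z - φn n z‖ ≤ ‖φn n z - φ z‖ := by
      have h6 := norm_sub_norm_le (ψ z - φ z) (ψ z - φn n z)
      have h7 : (ψ z - φ z) - (ψ z - φn n z) = φn n z - φ z := by ring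
      rwa [h7] at h6
    linarith
  have hsub : {z ∈ D | ψ z ≠ φ z} ⊆ ⋃ m, ⋃ k : ℕ, {z ∈ Km m | (1:ℝ)/(k+1) < ‖ψ z - φ z‖} := by
    rintro z ⟨hzD, hzne⟩
    obtain ⟨m, hm⟩ := hKmcover z hzD
    have hpos : 0 < ‖ψ z - φ z‖ := norm_sub_pos_iff.mpr hzne
    obtain ⟨k, hk⟩ := exists_nat_gt (1/‖ψ z - φ z‖)
    refine mem_iUnion.mpr ⟨m, mem_iUnion.mpr ⟨k, hm, ?_⟩⟩
    rw [div_lt_iff₀ (by positivity)]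
    have h8 : 1/‖ψ z - φ z‖ < (k:ℝ)+1 := hk.trans (by linarith)
    rw [div_lt_iff₀ hpos] at h8
    nlinarith
  have hz0 : sigmaContent (⋃ m, ⋃ k : ℕ, {z ∈ Km m | (1:ℝ)/(k+1) < ‖ψ z - φ z‖}) = 0 :=
    sigmaContent_iUnion_zero fun m => sigmaContent_iUnion_zero fun k => hSzero m k
  exact le_antisymm (le_trans (sigmaContent_mono hsub) hz0.le) (zero_le)
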